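/- arXiv:1806.09286 — 2 statements merged into one kernel-verified Lean document; each statement's English description precedes it below -/
import Mathlib

section
/- Let κ be a regular cardinal. If 𝔯_κ < 𝔡_κ then 𝔯_κ = 𝔲_κ. -/
open Cardinal

/-- `f ≤* g` in `κ^κ`: the set of counterexamples to domination has size `< κ`.
Here `κ` is represented by its canonical well-ordered type `κ.ord.ToType`. -/
def AlmostLE (κ : Cardinal) (f g : κ.ord.ToType → κ.ord.ToType) : Prop :=
  #↥{β : κ.ord.ToType | g β < f β} < κ

/-- The dominating number `𝔡_κ`: the minimal size of a family `D ⊆ κ^κ` such that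
every `f ∈ κ^κ` is `≤*`-dominated by a member of `D`. -/
noncomputable def dNumber (κ : Cardinal) : Cardinal :=
  sInf {c : Cardinal | ∃ D : Set (κ.ord.ToType → κ.ord.ToType),
    (∀ f : κ.ord.ToType → κ.ord.ToType, ∃ g ∈ D, AlmostLE κ f g) ∧ #↥D = c}

/-- `S` splits `B` iff `|S ∩ B| = |Sᶜ ∩ B| = κ`. -/
def Splits (κ : Cardinal) (S B : Set κ.ord.ToType) : Prop :=
  #↥(S ∩ B) = κ ∧ #↥(Sᶜ ∩ B) = κ

/-- A family `A ⊆ [κ]^κ` is unreaped iff no single `S ∈ [κ]^κ` splits all its members. -/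
def Unreaped (κ : Cardinal) (A : Set (Set κ.ord.ToType)) : Prop :=
  ¬ ∃ S : Set κ.ord.ToType, #↥S = κ ∧ ∀ y ∈ A, Splits κ S y

/-- The reaping number `𝔯_κ`: the minimal cardinality of an unreaped family in `[κ]^κ`. -/
noncomputable def rNumber (κ : Cardinal) : Cardinal :=
  sInf {c : Cardinal | ∃ A : Set (Set κ.ord.ToType),
    (∀ y ∈ A, #↥y = κ) ∧ Unreaped κ A ∧ #↥A = c}

/-- The ultrafilter number `𝔲_κ`: the minimal size of a base for some uniform
ultrafilter over `κ`. -/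
noncomputable def uNumber (κ : Cardinal) : Cardinal :=
  sInf {c : Cardinal | ∃ U : Ultrafilter κ.ord.ToType, (∀ A ∈ U, #↥A = κ) ∧
    ∃ B : Set (Set κ.ord.ToType), (∀ b ∈ B, b ∈ U) ∧ (∀ A ∈ U, ∃ b ∈ B, b ⊆ A) ∧ #↥B = c}


section RUDdev
open Set
set_option linter.unusedSectionVars false
attribute [local instance 10] Classical.propDecidable

namespace RUD
universe u

section Machine

variable {A : Type u} [LinearOrder A] [WellFoundedLT A]

/-- least element satisfying `p` -/
noncomputable def lst (p : A → Prop) (h : ∃ x, p x) : A :=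
  (IsWellFounded.wf (r := ((· < ·) : A → A → Prop))).min {x | p x} h

theorem lst_spec (p : A → Prop) (h : ∃ x, p x) : p (lst p h) :=
  WellFounded.min_mem _ {x | p x} h

theorem lst_le {p : A → Prop} {h : ∃ x, p x} {x : A} (hx : p x) : lst p h ≤ x :=
  not_lt.1 (WellFounded.not_lt_min _ {x | p x} hx)

variable {κ : Cardinal.{u}} (hreg : κ.IsRegular) (hcard : #A = κ)
  (hIio : ∀ a : A, #(Iio a) < κ)

section BddLemmas

include hreg in
theorem small_union {ι : Type u} (t : ι → Set A) (hι : #ι < κ) (ht : ∀ i, #(t i) < κ) :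
    #(⋃ i, t i) < κ :=
  (mk_iUnion_le t).trans_lt
    (mul_lt_of_lt hreg.aleph0_le hι (iSup_lt_of_isRegular hreg hι ht))

include hreg hIio in
theorem small_Iic (a : A) : #(Iic a) < κ := by
  rw [← Iio_insert]
  exact (mk_insert_le).trans_lt
    (add_lt_of_lt hreg.aleph0_le (hIio a) (one_lt_aleph0.trans_le hreg.aleph0_le))

include hreg hcard hIio in
theorem bounded_of_small {s : Set A} (hs : #s < κ) : ∃ γ : A, ∀ x ∈ s, x < γ := by
  by_contra hb
  push_neg at hb
  have hcov : (univ : Set A) ⊆ ⋃ x : s, Iic x.1 := by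
    intro γ _
    obtain ⟨x, hx, hge⟩ := hb γ
    exact mem_iUnion.2 ⟨⟨x, hx⟩, hge⟩
  have : κ ≤ #(⋃ x : s, Iic x.1) := by
    calc κ = #A := hcard.symm
    _ = #(univ : Set A) := mk_univ.symm
    _ ≤ _ := mk_le_mk_of_subset hcov
  exact absurd (small_union hreg (fun x : s => Iic x.1) hs (fun x => small_Iic hreg hIio x.1))
    (not_lt.2 this)

include hIio in
theorem small_of_bounded {s : Set A} {γ : A} (h : ∀ x ∈ s, x < γ) : #s < κ :=
  (mk_le_mk_of_subset (fun x hx => h x hx : s ⊆ Iio γ)).trans_lt (hIio γ)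

include hreg hcard hIio in
theorem unbounded_of_large {s : Set A} (hs : κ ≤ #s) (γ : A) : ∃ x ∈ s, γ ≤ x := by
  by_contra hb
  push_neg at hb
  exact absurd (small_of_bounded hIio hb) (not_lt.2 hs)

include hcard in
theorem mk_set_le_kappa (s : Set A) : #s ≤ κ := hcard ▸ mk_set_le s

include hreg hcard hIio in
theorem eq_of_unbounded {s : Set A} (h : ∀ γ : A, ∃ x ∈ s, γ ≤ x) : #s = κ := by
  refine le_antisymm (mk_set_le_kappa hcard s) ?_
  by_contra hlt
  push_neg at hlt
  obtain ⟨γ, hγ⟩ := bounded_of_small hreg hcard hIio hlt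
  obtain ⟨x, hx, hge⟩ := h γ
  exact absurd (hγ x hx) (not_lt.2 hge)

include hreg hcard hIio in
theorem exists_gt (j : A) : ∃ γ : A, j < γ := by
  by_contra hb
  push_neg at hb
  have : κ ≤ #(Iic j) := by
    calc κ = #(univ : Set A) := by rw [mk_univ, hcard]
    _ ≤ #(Iic j) := mk_le_mk_of_subset (fun x _ => hb x)
  exact absurd (small_Iic hreg hIio j) (not_lt.2 this)

end BddLemmas

end Machine
section Machine2

variable {A : Type u} [LinearOrder A] [WellFoundedLT A]
variable {κ : Cardinal.{u}} (hreg : κ.IsRegular) (hcard : #A = κ)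
  (hIio : ∀ a : A, #(Iio a) < κ)

/-- successor -/
noncomputable def nxt (j : A) : A := lst (fun γ => j < γ) (exists_gt hreg hcard hIio j)

theorem lt_nxt (j : A) : j < nxt hreg hcard hIio j := lst_spec _ _

theorem nxt_le {j γ : A} (h : j < γ) : nxt hreg hcard hIio j ≤ γ := lst_le h

theorem le_of_lt_nxt {i j : A} (h : i < nxt hreg hcard hIio j) : i ≤ j := by
  by_contra hc
  push_neg at hc
  exact absurd (nxt_le hreg hcard hIio hc) (not_le.2 h)

variable (f : A → A)

include hreg hcard hIio in
theorem Ff_exists (δ : A) : ∃ γ : A, (∀ x ≤ δ, f x < γ) ∧ δ < γ := by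
  obtain ⟨γ, hγ⟩ := bounded_of_small hreg hcard hIio
    (s := insert δ (f '' Iic δ))
    ((mk_insert_le).trans_lt (add_lt_of_lt hreg.aleph0_le
      (mk_image_le.trans_lt (small_Iic hreg hIio δ)) (one_lt_aleph0.trans_le hreg.aleph0_le)))
  exact ⟨γ, fun x hx => hγ _ (Or.inr ⟨x, hx, rfl⟩), hγ _ (Or.inl rfl)⟩

/-- strict sup of `f` on `Iic δ`, above `δ` -/
noncomputable def Ff (δ : A) : A :=
  lst (fun γ => (∀ x ≤ δ, f x < γ) ∧ δ < γ) (Ff_exists hreg hcard hIio f δ)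

theorem lt_Ff {x δ : A} (h : x ≤ δ) : f x < Ff hreg hcard hIio f δ :=
  (lst_spec (fun γ => (∀ x ≤ δ, f x < γ) ∧ δ < γ) (Ff_exists hreg hcard hIio f δ)).1 x h

theorem self_lt_Ff (δ : A) : δ < Ff hreg hcard hIio f δ :=
  (lst_spec (fun γ => (∀ x ≤ δ, f x < γ) ∧ δ < γ) (Ff_exists hreg hcard hIio f δ)).2

theorem Ff_mono : Monotone (Ff hreg hcard hIio f) := by
  intro a b hab
  exact lst_le ⟨fun x hx => (lst_spec _ (Ff_exists hreg hcard hIio f b)).1 x (hx.trans hab),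
    lt_of_le_of_lt hab (self_lt_Ff hreg hcard hIio f b)⟩

private noncomputable def cseqBody (j : A) (rec : ∀ i, i < j → A) : A :=
  lst (fun γ => ∀ i, ∀ h : i < j, Ff hreg hcard hIio f (rec i h) ≤ γ)
    (by
      obtain ⟨γ, hγ⟩ := bounded_of_small hreg hcard hIio
        (s := range (fun i : Iio j => Ff hreg hcard hIio f (rec i.1 i.2)))
        (mk_range_le.trans_lt (hIio j))
      exact ⟨γ, fun i h => (hγ _ ⟨⟨i, h⟩, rfl⟩).le⟩)

/-- the interval-boundary sequence -/
noncomputable def cseq : A → A :=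
  (IsWellFounded.wf (r := ((· < ·) : A → A → Prop))).fix
    (cseqBody hreg hcard hIio f)

theorem cseq_eq (j : A) :
    cseq hreg hcard hIio f j
      = cseqBody hreg hcard hIio f j (fun i _ => cseq hreg hcard hIio f i) :=
  WellFounded.fix_eq _ _ j

theorem cseq_spec {i j : A} (h : i < j) :
    Ff hreg hcard hIio f (cseq hreg hcard hIio f i) ≤ cseq hreg hcard hIio f j := by
  rw [cseq_eq hreg hcard hIio f j]
  exact lst_spec (fun γ => ∀ i, ∀ h : i < j, Ff hreg hcard hIio f (cseq hreg hcard hIio f i) ≤ γ) _ i h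

theorem cseq_le {j γ : A}
    (h : ∀ i, i < j → Ff hreg hcard hIio f (cseq hreg hcard hIio f i) ≤ γ) :
    cseq hreg hcard hIio f j ≤ γ := by
  rw [cseq_eq hreg hcard hIio f j]
  exact lst_le (fun i hi => h i hi)

theorem cseq_strictMono : StrictMono (cseq hreg hcard hIio f) := by
  intro i j hij
  exact lt_of_lt_of_le (self_lt_Ff hreg hcard hIio f _) (cseq_spec hreg hcard hIio f hij)

theorem le_cseq (j : A) : j ≤ cseq hreg hcard hIio f j := by
  induction j using WellFoundedLT.induction with
  | ind j IH =>
    by_contra hc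
    push_neg at hc
    have h1 := IH _ hc
    have h2 := cseq_strictMono hreg hcard hIio f hc
    exact absurd (h1.trans_lt h2) (lt_irrefl _)

theorem cseq_nxt (j : A) :
    cseq hreg hcard hIio f (nxt hreg hcard hIio j)
      = Ff hreg hcard hIio f (cseq hreg hcard hIio f j) := by
  refine le_antisymm ?_ (cseq_spec hreg hcard hIio f (lt_nxt hreg hcard hIio j))
  refine cseq_le hreg hcard hIio f (fun i hi => ?_)
  exact Ff_mono hreg hcard hIio f
    ((cseq_strictMono hreg hcard hIio f).monotone (le_of_lt_nxt hreg hcard hIio hi))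

end Machine2
section Machine3

variable {A : Type u} [LinearOrder A] [WellFoundedLT A]
variable {κ : Cardinal.{u}} (hreg : κ.IsRegular) (hcard : #A = κ)
  (hIio : ∀ a : A, #(Iio a) < κ) (f : A → A)

/-- the interval collapse map -/
noncomputable def hmap (β : A) : A :=
  lst (fun j => β < Ff hreg hcard hIio f (cseq hreg hcard hIio f j))
    ⟨β, lt_of_le_of_lt (le_cseq hreg hcard hIio f β) (self_lt_Ff hreg hcard hIio f _)⟩

theorem hmap_spec (β : A) :
    β < Ff hreg hcard hIio f (cseq hreg hcard hIio f (hmap hreg hcard hIio f β)) :=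
  lst_spec (fun j => β < Ff hreg hcard hIio f (cseq hreg hcard hIio f j)) _

theorem hmap_le {β j : A} (h : β < Ff hreg hcard hIio f (cseq hreg hcard hIio f j)) :
    hmap hreg hcard hIio f β ≤ j := lst_le h

theorem hmap_min {i β : A} (h : i < hmap hreg hcard hIio f β) :
    Ff hreg hcard hIio f (cseq hreg hcard hIio f i) ≤ β := by
  by_contra hc
  push_neg at hc
  exact absurd (hmap_le hreg hcard hIio f hc) (not_le.2 h)

theorem cseq_hmap_le (β : A) :
    cseq hreg hcard hIio f (hmap hreg hcard hIio f β) ≤ β :=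
  cseq_le hreg hcard hIio f (fun _ hi => hmap_min hreg hcard hIio f hi)

theorem hmap_mono : Monotone (hmap hreg hcard hIio f) := fun a b hab =>
  hmap_le hreg hcard hIio f (lt_of_le_of_lt hab (hmap_spec hreg hcard hIio f b))

theorem hmap_eq_of {p j : A} (h1 : cseq hreg hcard hIio f j ≤ p)
    (h2 : p < Ff hreg hcard hIio f (cseq hreg hcard hIio f j)) :
    hmap hreg hcard hIio f p = j := by
  refine le_antisymm (hmap_le hreg hcard hIio f h2) ?_
  by_contra hc
  push_neg at hc
  have h3 := cseq_spec hreg hcard hIio f hc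
  exact absurd ((hmap_spec hreg hcard hIio f p).trans_le (h3.trans h1)) (lt_irrefl _)

theorem hmap_cseq (j : A) : hmap hreg hcard hIio f (cseq hreg hcard hIio f j) = j :=
  hmap_eq_of hreg hcard hIio f le_rfl (self_lt_Ff hreg hcard hIio f _)

theorem fiber_small (j : A) : #{x : A | hmap hreg hcard hIio f x = j} < κ := by
  refine small_of_bounded hIio (γ := Ff hreg hcard hIio f (cseq hreg hcard hIio f j)) ?_
  intro x hx
  have := hmap_spec hreg hcard hIio f x
  rwa [show hmap hreg hcard hIio f x = j from hx] at this

include hreg hcard hIio in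
theorem mk_image_eq_kappa {s : Set A} (g : A → A) (hs : κ ≤ #s)
    (hfib : ∀ j : A, #{x : A | g x = j} < κ) : #(g '' s) = κ := by
  refine le_antisymm (mk_set_le_kappa hcard _) ?_
  by_contra hlt
  push_neg at hlt
  have hcov : s ⊆ ⋃ j : g '' s, {x : A | g x = j.1} := by
    intro x hx
    exact mem_iUnion.2 ⟨⟨g x, ⟨x, hx, rfl⟩⟩, rfl⟩
  have : κ ≤ #(⋃ j : g '' s, {x : A | g x = j.1}) := hs.trans (mk_le_mk_of_subset hcov)
  exact absurd (small_union hreg (fun j : g '' s => {x : A | g x = j.1}) hlt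
    (fun j => hfib j.1)) (not_lt.2 this)

end Machine3
section KappaSetup

variable {κ : Cardinal.{u}}

noncomputable abbrev OT (κ : Cardinal.{u}) : Type u := κ.ord.ToType

theorem hcardOT (κ : Cardinal.{u}) : #(OT κ) = κ := mk_ord_toType κ

theorem hIioOT : ∀ a : OT κ, #(Iio a) < κ := fun a => mk_Iio_ord_toType a

variable (hreg : κ.IsRegular)

include hreg in
theorem unbounded_mem {B : Set (OT κ)} (hB : κ ≤ #B) (γ : OT κ) : ∃ p ∈ B, γ ≤ p :=
  unbounded_of_large hreg (hcardOT κ) hIioOT hB γ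

end KappaSetup
section Diagonal

variable {κ : Cardinal.{u}} (hreg : κ.IsRegular)

include hreg in
theorem exists_E : ∃ E : Set (OT κ), #E = κ ∧ κ ≤ #(Eᶜ : Set (OT κ)) := by
  have hsum : #(OT κ ⊕ OT κ) = #(OT κ) := by
    simp only [mk_sum, lift_id, hcardOT]
    exact add_eq_self hreg.aleph0_le
  obtain ⟨e⟩ := Cardinal.eq.1 hsum
  refine ⟨range (fun x => e (Sum.inl x)), ?_, ?_⟩
  · rw [mk_range_eq (fun x => e (Sum.inl x)) (fun a b hab => Sum.inl_injective (e.injective hab)), hcardOT]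
  · have hsub : range (fun x => e (Sum.inr x)) ⊆ (range (fun x => e (Sum.inl x)))ᶜ := by
      rintro x ⟨y, rfl⟩ ⟨z, hz⟩
      exact absurd (e.injective hz) (by simp)
    calc κ = #(range (fun x : OT κ => e (Sum.inr x))) := by
          rw [mk_range_eq (fun x => e (Sum.inr x)) (fun a b hab => Sum.inr_injective (e.injective hab)), hcardOT]
    _ ≤ _ := mk_le_mk_of_subset hsub

include hreg in
theorem kappa_le_of_unreaped {A₀ : Set (Set (OT κ))} (hy : ∀ y ∈ A₀, #y = κ)
    (hunr : Unreaped κ A₀) : κ ≤ #A₀ := by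
  by_contra hlt
  push_neg at hlt
  rcases eq_empty_or_nonempty A₀ with hemp | ⟨B₀, hB₀⟩
  · refine hunr ⟨univ, by rw [mk_univ, hcardOT], ?_⟩
    intro y hyA
    rw [hemp] at hyA
    exact absurd hyA (notMem_empty y)
  classical
  have hub : ∀ B, B ∈ A₀ → ∀ γ : OT κ, ∃ p, p ∈ B ∧ γ ≤ p := by
    intro B hB γ
    obtain ⟨p, h1, h2⟩ := unbounded_mem hreg (le_of_eq (hy B hB).symm) γ
    exact ⟨p, h1, h2⟩
  have hgex : ∀ β : OT κ, ∃ γ : OT κ, ∀ B ∈ A₀, ∃ p ∈ B, β < p ∧ p < γ := by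
    intro β
    choose pf hp1 hp2 using fun B : A₀ =>
      hub B.1 B.2 (nxt hreg (hcardOT κ) hIioOT β)
    obtain ⟨γ, hγ⟩ := bounded_of_small hreg (hcardOT κ) hIioOT (s := range pf)
      (mk_range_le.trans_lt hlt)
    refine ⟨γ, fun B hB => ⟨pf ⟨B, hB⟩, hp1 ⟨B, hB⟩, ?_, hγ _ ⟨⟨B, hB⟩, rfl⟩⟩⟩
    exact lt_of_lt_of_le (lt_nxt hreg (hcardOT κ) hIioOT β) (hp2 ⟨B, hB⟩)
  set g : OT κ → OT κ := fun β => lst (fun γ => ∀ B ∈ A₀, ∃ p ∈ B, β < p ∧ p < γ) (hgex β)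
    with hgdef
  have hgspec : ∀ β : OT κ, ∀ B ∈ A₀, ∃ p ∈ B, β < p ∧ p < g β := by
    intro β
    exact lst_spec (fun γ => ∀ B ∈ A₀, ∃ p ∈ B, β < p ∧ p < γ) (hgex β)
  -- every fiber of the collapse meets every member of A₀
  have hfib : ∀ (B : A₀) (j : OT κ), ∃ p, p ∈ B.1 ∧ hmap hreg (hcardOT κ) hIioOT g p = j := by
    intro B j
    obtain ⟨p, hp, hp1, hp2⟩ := hgspec (cseq hreg (hcardOT κ) hIioOT g j) B.1 B.2
    refine ⟨p, hp, hmap_eq_of hreg (hcardOT κ) hIioOT g (le_of_lt hp1) ?_⟩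
    exact hp2.trans (lt_Ff hreg (hcardOT κ) hIioOT g le_rfl)
  choose pk hpk1 hpk2 using hfib
  obtain ⟨E, hE, hEc⟩ := exists_E hreg
  set S : Set (OT κ) := ⋃ B : A₀, pk B '' E with hSdef
  have hpkinj : ∀ B : A₀, Function.Injective (pk B) := by
    intro B x y hxy
    rw [← hpk2 B x, ← hpk2 B y, hxy]
  have hSsub : ∀ (B : A₀) (j : OT κ), pk B j ∈ S ↔ j ∈ E := by
    intro B j
    constructor
    · rintro hmem
      obtain ⟨B', j', hj', heq⟩ := by
        simpa only [hSdef, mem_iUnion, mem_image] using hmem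
      have : j' = j := by rw [← hpk2 B' j', heq, hpk2 B j]
      rwa [← this]
    · intro hj
      exact mem_iUnion.2 ⟨B, ⟨j, hj, rfl⟩⟩
  refine hunr ⟨S, ?_, ?_⟩
  · refine le_antisymm (mk_set_le_kappa (hcardOT κ) S) ?_
    have h1 : #(pk ⟨B₀, hB₀⟩ '' E) = κ := by
      rw [mk_image_eq_of_injOn _ _ ((hpkinj ⟨B₀, hB₀⟩).injOn), hE]
    calc κ = #(pk ⟨B₀, hB₀⟩ '' E) := h1.symm
    _ ≤ #S := mk_le_mk_of_subset (fun x hx => mem_iUnion.2 ⟨⟨B₀, hB₀⟩, hx⟩)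
  · intro y hyA
    constructor
    · refine le_antisymm (mk_set_le_kappa (hcardOT κ) _) ?_
      have h1 : #(pk ⟨y, hyA⟩ '' E) = κ := by
        rw [mk_image_eq_of_injOn _ _ ((hpkinj ⟨y, hyA⟩).injOn), hE]
      refine h1.symm.trans_le (mk_le_mk_of_subset ?_)
      rintro x ⟨j, hj, rfl⟩
      exact ⟨(hSsub ⟨y, hyA⟩ j).2 hj, hpk1 ⟨y, hyA⟩ j⟩
    · refine le_antisymm (mk_set_le_kappa (hcardOT κ) _) ?_
      have h1 : κ ≤ #(pk ⟨y, hyA⟩ '' (Eᶜ : Set (OT κ))) := by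
        rw [mk_image_eq_of_injOn _ _ ((hpkinj ⟨y, hyA⟩).injOn)]
        exact hEc
      refine h1.trans (mk_le_mk_of_subset ?_)
      rintro x ⟨j, hj, rfl⟩
      refine ⟨fun hmem => hj ((hSsub ⟨y, hyA⟩ j).1 hmem), hpk1 ⟨y, hyA⟩ j⟩

end Diagonal
section Easy

variable {κ : Cardinal.{u}} (hreg : κ.IsRegular)

include hreg in
theorem unreaped_univfam : Unreaped κ {S : Set (OT κ) | #S = κ} := by
  rintro ⟨S, hS, hsp⟩
  have h2 := (hsp S hS).2
  rw [compl_inter_self, mk_emptyCollection] at h2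
  exact absurd h2.symm (aleph0_pos.trans_le hreg.aleph0_le).ne'

theorem rNumber_le_of_unreaped {A : Set (Set (OT κ))} (h1 : ∀ y ∈ A, #y = κ)
    (h2 : Unreaped κ A) : rNumber κ ≤ #A :=
  csInf_le ⟨0, fun c _ => (zero_le : 0 ≤ c)⟩ ⟨A, h1, h2, rfl⟩

include hreg in
theorem rNumber_mem : ∃ A₀ : Set (Set (OT κ)),
    (∀ y ∈ A₀, #y = κ) ∧ Unreaped κ A₀ ∧ #A₀ = rNumber κ := by
  have hne : {c : Cardinal | ∃ A : Set (Set (OT κ)),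
      (∀ y ∈ A, #y = κ) ∧ Unreaped κ A ∧ #A = c}.Nonempty :=
    ⟨#{S : Set (OT κ) | #S = κ}, {S : Set (OT κ) | #S = κ}, fun y hy => hy,
      unreaped_univfam hreg, rfl⟩
  obtain ⟨A₀, h1, h2, h3⟩ := csInf_mem hne
  exact ⟨A₀, h1, h2, h3⟩

include hreg in
theorem rNumber_le_base {c : Cardinal}
    (hc : c ∈ {c : Cardinal | ∃ U : Ultrafilter (OT κ), (∀ A ∈ U, #A = κ) ∧
      ∃ B : Set (Set (OT κ)), (∀ b ∈ B, b ∈ U) ∧ (∀ A ∈ U, ∃ b ∈ B, b ⊆ A) ∧ #B = c}) :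
    rNumber κ ≤ c := by
  obtain ⟨U, hU, B, hBU, hBbase, rfl⟩ := hc
  refine rNumber_le_of_unreaped (fun b hb => hU b (hBU b hb)) ?_
  rintro ⟨S, hS, hsp⟩
  have hzero : (0 : Cardinal) ≠ κ := (aleph0_pos.trans_le hreg.aleph0_le).ne
  rcases U.mem_or_compl_mem S with hmem | hmem
  · obtain ⟨b, hb, hbS⟩ := hBbase S hmem
    have h2 := (hsp b hb).2
    have : Sᶜ ∩ b = ∅ := by
      ext x
      simp only [mem_inter_iff, mem_compl_iff, mem_empty_iff_false, iff_false, not_and]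
      exact fun hxc hxb => hxc (hbS hxb)
    rw [this, mk_emptyCollection] at h2
    exact hzero h2
  · obtain ⟨b, hb, hbS⟩ := hBbase Sᶜ hmem
    have h1 := (hsp b hb).1
    have : S ∩ b = ∅ := by
      ext x
      simp only [mem_inter_iff, mem_empty_iff_false, iff_false, not_and]
      exact fun hxS hxb => (hbS hxb) hxS
    rw [this, mk_emptyCollection] at h1
    exact hzero h1

end Easy
section MainAux

variable {κ : Cardinal.{u}} (hreg : κ.IsRegular)

theorem mk_validH_le {A₀ : Set (Set (OT κ))} (hinf : ℵ₀ ≤ #A₀) :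
    #{H : Finset (Set (OT κ)) // ↑H ⊆ A₀} ≤ #A₀ := by
  classical
  have hInf : Infinite ↥A₀ := Cardinal.infinite_iff.2 hinf
  have hsurj : Function.Surjective
      (fun s : Finset ↥A₀ => (⟨s.image Subtype.val, by
        intro x hx
        simp only [Finset.coe_image] at hx
        obtain ⟨y, _, rfl⟩ := hx
        exact y.2⟩ : {H : Finset (Set (OT κ)) // ↑H ⊆ A₀})) := by
    rintro ⟨H, hH⟩
    refine ⟨H.attach.image (fun x => (⟨x.1, hH x.2⟩ : ↥A₀)), ?_⟩
    apply Subtype.ext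
    ext z
    simp only [Finset.image_image, Finset.mem_image, Finset.mem_attach, true_and,
      Function.comp_apply]
    constructor
    · rintro ⟨x, rfl⟩
      exact x.2
    · intro hz
      exact ⟨⟨z, hz⟩, rfl⟩
  calc #{H : Finset (Set (OT κ)) // ↑H ⊆ A₀} ≤ #(Finset ↥A₀) := mk_le_of_surjective hsurj
  _ = #↥A₀ := mk_finset_of_infinite _

variable {A₀ : Set (Set (OT κ))}

include hreg in
theorem gH_exists (hy : ∀ y ∈ A₀, #y = κ) (HH : {H : Finset (Set (OT κ)) // ↑H ⊆ A₀})
    (β : OT κ) : ∃ γ : OT κ, ∀ B ∈ HH.1, ∃ p ∈ B, β < p ∧ p < γ := by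
  classical
  choose pf hp1 hp2 using fun B : ↥HH.1 =>
    unbounded_mem hreg (le_of_eq (hy B.1 (HH.2 B.2)).symm) (nxt hreg (hcardOT κ) hIioOT β)
  obtain ⟨γ, hγ⟩ := bounded_of_small hreg (hcardOT κ) hIioOT (s := range pf)
    (mk_range_le.trans_lt (lt_of_lt_of_le (Cardinal.lt_aleph0_of_finite _) hreg.aleph0_le))
  refine ⟨γ, fun B hB => ⟨pf ⟨B, hB⟩, hp1 ⟨B, hB⟩, ?_, hγ _ ⟨⟨B, hB⟩, rfl⟩⟩⟩
  exact lt_of_lt_of_le (lt_nxt hreg (hcardOT κ) hIioOT β) (hp2 ⟨B, hB⟩)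

/-- for a finite `H ⊆ A₀`, the sweep function collecting points of all members of `H` -/
noncomputable def gHf (hy : ∀ y ∈ A₀, #y = κ) (HH : {H : Finset (Set (OT κ)) // ↑H ⊆ A₀})
    (β : OT κ) : OT κ :=
  lst (fun γ => ∀ B ∈ HH.1, ∃ p ∈ B, β < p ∧ p < γ) (gH_exists hreg hy HH β)

theorem gHf_spec (hy : ∀ y ∈ A₀, #y = κ) (HH : {H : Finset (Set (OT κ)) // ↑H ⊆ A₀})
    (β : OT κ) : ∀ B ∈ HH.1, ∃ p ∈ B, β < p ∧ p < gHf hreg hy HH β :=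
  lst_spec (fun γ => ∀ B ∈ HH.1, ∃ p ∈ B, β < p ∧ p < γ) (gH_exists hreg hy HH β)

theorem gHf_mono (hy : ∀ y ∈ A₀, #y = κ) (HH : {H : Finset (Set (OT κ)) // ↑H ⊆ A₀}) :
    Monotone (gHf hreg hy HH) := by
  intro a b hab
  refine lst_le (fun B hB => ?_)
  obtain ⟨p, hp, h1, h2⟩ := gHf_spec hreg hy HH b B hB
  exact ⟨p, hp, hab.trans_lt h1, h2⟩

/-- the trace set: indices of intervals meeting every member of `H` -/
def Tset (f : OT κ → OT κ) (H : Finset (Set (OT κ))) : Set (OT κ) :=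
  {j | ∀ B ∈ H, ∃ p ∈ B, hmap hreg (hcardOT κ) hIioOT f p = j}

theorem Tset_inter (f : OT κ → OT κ) (H₁ H₂ : Finset (Set (OT κ))) :
    Tset hreg f (H₁ ∪ H₂) = Tset hreg f H₁ ∩ Tset hreg f H₂ := by
  ext j
  constructor
  · intro hj
    exact ⟨fun B hB => hj B (Finset.mem_union_left _ hB),
      fun B hB => hj B (Finset.mem_union_right _ hB)⟩
  · rintro ⟨h1, h2⟩ B hB
    rcases Finset.mem_union.1 hB with hB | hB
    · exact h1 B hB
    · exact h2 B hB

theorem Tset_good (hy : ∀ y ∈ A₀, #y = κ) (f : OT κ → OT κ)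
    (HH : {H : Finset (Set (OT κ)) // ↑H ⊆ A₀})
    (hesc2 : ∀ γ : OT κ, ∃ β, γ ≤ β ∧ gHf hreg hy HH (gHf hreg hy HH β) < f β) :
    ∀ γ : OT κ, ∃ j, γ ≤ j ∧ j ∈ Tset hreg f HH.1 := by
  intro γ
  by_contra hbad
  push_neg at hbad
  have hfail : ∀ j, γ ≤ j →
      Ff hreg (hcardOT κ) hIioOT f (cseq hreg (hcardOT κ) hIioOT f j)
        ≤ gHf hreg hy HH (cseq hreg (hcardOT κ) hIioOT f j) := by
    intro j hj
    by_contra hc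
    push_neg at hc
    refine hbad j hj (fun B hB => ?_)
    obtain ⟨p, hp, h1, h2⟩ := gHf_spec hreg hy HH (cseq hreg (hcardOT κ) hIioOT f j) B hB
    exact ⟨p, hp, hmap_eq_of hreg (hcardOT κ) hIioOT f (le_of_lt h1) (h2.trans hc)⟩
  obtain ⟨β, hβ1, hβ2⟩ := hesc2 (cseq hreg (hcardOT κ) hIioOT f γ)
  set j := hmap hreg (hcardOT κ) hIioOT f β with hjdef
  have hjγ : γ ≤ j := by
    rw [hjdef, ← hmap_cseq hreg (hcardOT κ) hIioOT f γ]
    exact hmap_mono hreg (hcardOT κ) hIioOT f hβ1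
  have hcjβ : cseq hreg (hcardOT κ) hIioOT f j ≤ β := cseq_hmap_le hreg (hcardOT κ) hIioOT f β
  have hβFf : β < Ff hreg (hcardOT κ) hIioOT f (cseq hreg (hcardOT κ) hIioOT f j) :=
    hmap_spec hreg (hcardOT κ) hIioOT f β
  have hFfnxt : Ff hreg (hcardOT κ) hIioOT f (cseq hreg (hcardOT κ) hIioOT f j)
      = cseq hreg (hcardOT κ) hIioOT f (nxt hreg (hcardOT κ) hIioOT j) :=
    (cseq_nxt hreg (hcardOT κ) hIioOT f j).symm
  have key_ge : Ff hreg (hcardOT κ) hIioOT f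
        (Ff hreg (hcardOT κ) hIioOT f (cseq hreg (hcardOT κ) hIioOT f j))
      ≤ gHf hreg hy HH (gHf hreg hy HH (cseq hreg (hcardOT κ) hIioOT f j)) := by
    have s1 : cseq hreg (hcardOT κ) hIioOT f (nxt hreg (hcardOT κ) hIioOT j)
        ≤ gHf hreg hy HH (cseq hreg (hcardOT κ) hIioOT f j) := by
      rw [← hFfnxt]
      exact hfail j hjγ
    have s2 := gHf_mono hreg hy HH s1
    have s3 := hfail (nxt hreg (hcardOT κ) hIioOT j)
      (hjγ.trans (le_of_lt (lt_nxt hreg (hcardOT κ) hIioOT j)))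
    rw [cseq_nxt hreg (hcardOT κ) hIioOT f j] at s2 s3
    exact s3.trans s2
  have key_lt : gHf hreg hy HH (gHf hreg hy HH (cseq hreg (hcardOT κ) hIioOT f j))
      < Ff hreg (hcardOT κ) hIioOT f
        (Ff hreg (hcardOT κ) hIioOT f (cseq hreg (hcardOT κ) hIioOT f j)) := by
    have s1 : gHf hreg hy HH (gHf hreg hy HH (cseq hreg (hcardOT κ) hIioOT f j))
        ≤ gHf hreg hy HH (gHf hreg hy HH β) :=
      gHf_mono hreg hy HH (gHf_mono hreg hy HH hcjβ)
    have s2 : f β < Ff hreg (hcardOT κ) hIioOT f β :=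
      lt_Ff hreg (hcardOT κ) hIioOT f le_rfl
    have s3 : Ff hreg (hcardOT κ) hIioOT f β ≤ Ff hreg (hcardOT κ) hIioOT f
        (Ff hreg (hcardOT κ) hIioOT f (cseq hreg (hcardOT κ) hIioOT f j)) := by
      refine Ff_mono hreg (hcardOT κ) hIioOT f (le_of_lt hβFf)
    exact ((s1.trans_lt hβ2).trans s2).trans_le s3
  exact absurd (key_ge.trans_lt key_lt) (lt_irrefl _)

end MainAux
section Final

variable {κ : Cardinal.{u}} (hreg : κ.IsRegular)

include hreg in
theorem exists_small_base (hlt : rNumber κ < dNumber κ) :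
    ∃ c ∈ {c : Cardinal | ∃ U : Ultrafilter (OT κ), (∀ A ∈ U, #A = κ) ∧
      ∃ B : Set (Set (OT κ)), (∀ b ∈ B, b ∈ U) ∧ (∀ A ∈ U, ∃ b ∈ B, b ⊆ A) ∧ #B = c},
      c ≤ rNumber κ := by
  classical
  obtain ⟨A₀, hy, hunr, hAr⟩ := rNumber_mem hreg
  have hk : κ ≤ #A₀ := kappa_le_of_unreaped hreg hy hunr
  have hkr : κ ≤ rNumber κ := hAr ▸ hk
  have hinf : ℵ₀ ≤ #A₀ := hreg.aleph0_le.trans hk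
  have hVH : #{H : Finset (Set (OT κ)) // ↑H ⊆ A₀} ≤ rNumber κ := hAr ▸ mk_validH_le hinf
  -- the escape function exists since the sweep family is not dominating
  set D : Set (OT κ → OT κ) :=
    range (fun HH : {H : Finset (Set (OT κ)) // ↑H ⊆ A₀} => gHf hreg hy HH) ∪
    range (fun HH : {H : Finset (Set (OT κ)) // ↑H ⊆ A₀} =>
      fun β => gHf hreg hy HH (gHf hreg hy HH β)) with hDdef
  have hDle : #D ≤ rNumber κ := by
    refine (mk_union_le _ _).trans ?_
    refine le_trans (add_le_add (mk_range_le.trans hVH) (mk_range_le.trans hVH)) ?_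
    exact le_of_eq (add_eq_self (hreg.aleph0_le.trans hkr))
  have hnotdom : ¬ ∀ f : OT κ → OT κ, ∃ g ∈ D, AlmostLE κ f g := by
    intro hdom
    have hd : dNumber κ ≤ #D := csInf_le ⟨0, fun c _ => (zero_le : 0 ≤ c)⟩ ⟨D, hdom, rfl⟩
    exact absurd ((hd.trans hDle).trans_lt hlt) (lt_irrefl _)
  push_neg at hnotdom
  obtain ⟨f, hf⟩ := hnotdom
  have hesc2 : ∀ HH : {H : Finset (Set (OT κ)) // ↑H ⊆ A₀}, ∀ γ : OT κ, ∃ β, γ ≤ β ∧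
      gHf hreg hy HH (gHf hreg hy HH β) < f β := by
    intro HH γ
    have hmem : (fun β => gHf hreg hy HH (gHf hreg hy HH β)) ∈ D := Or.inr ⟨HH, rfl⟩
    have hna := hf _ hmem
    have hk2 : κ ≤ #{β : OT κ | gHf hreg hy HH (gHf hreg hy HH β) < f β} :=
      not_lt.1 (fun hcon => hna hcon)
    obtain ⟨β, hβ, hβ2⟩ := unbounded_of_large hreg (hcardOT κ) hIioOT hk2 γ
    exact ⟨β, hβ2, hβ⟩
  have hTlarge : ∀ H : Finset (Set (OT κ)), ↑H ⊆ A₀ → #(Tset hreg f H) = κ := by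
    intro H hH
    refine eq_of_unbounded hreg (hcardOT κ) hIioOT ?_
    intro γ
    obtain ⟨j, h1, h2⟩ := Tset_good hreg hy f ⟨H, hH⟩ (hesc2 ⟨H, hH⟩) γ
    exact ⟨j, h2, h1⟩
  -- the filter generated by the trace sets
  set Fset : Set (Set (OT κ)) :=
    {S | ∃ H : Finset (Set (OT κ)), ↑H ⊆ A₀ ∧ ∃ β, Tset hreg f H ∩ Ici β ⊆ S} with hFdef
  obtain ⟨b0⟩ : Nonempty (OT κ) := by
    rw [← Cardinal.mk_ne_zero_iff, hcardOT]
    exact (aleph0_pos.trans_le hreg.aleph0_le).ne'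
  have hmemF_large : ∀ S ∈ Fset, #S = κ := by
    rintro S ⟨H, hH, β, hsub⟩
    refine le_antisymm (mk_set_le_kappa (hcardOT κ) S) ?_
    have hlarge : κ ≤ #(Tset hreg f H ∩ Ici β : Set (OT κ)) := by
      by_contra hc
      push_neg at hc
      have hsplit : (Tset hreg f H : Set (OT κ)) ⊆
          (Tset hreg f H ∩ Iio β) ∪ (Tset hreg f H ∩ Ici β) := by
        intro x hx
        rcases lt_or_ge x β with hxβ | hxβ
        · exact Or.inl ⟨hx, hxβ⟩
        · exact Or.inr ⟨hx, hxβ⟩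
      have h1 : κ ≤ #((Tset hreg f H ∩ Iio β) ∪ (Tset hreg f H ∩ Ici β) : Set (OT κ)) :=
        (hTlarge H hH).symm.trans_le (mk_le_mk_of_subset hsplit)
      have h2 : #((Tset hreg f H ∩ Iio β) ∪ (Tset hreg f H ∩ Ici β) : Set (OT κ)) < κ :=
        (mk_union_le _ _).trans_lt (add_lt_of_lt hreg.aleph0_le
          ((mk_le_mk_of_subset inter_subset_right).trans_lt (hIioOT β)) hc)
      exact absurd h2 (not_lt.2 h1)
    exact hlarge.trans (mk_le_mk_of_subset hsub)
  set Fil : Filter (OT κ) :=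
    { sets := Fset
      univ_sets := ⟨∅, by simp, b0, subset_univ _⟩
      sets_of_superset := by
        rintro S S' ⟨H, hH, β, hsub⟩ hSS'
        exact ⟨H, hH, β, hsub.trans hSS'⟩
      inter_sets := by
        rintro S S' ⟨H, hH, β, hsub⟩ ⟨H', hH', β', hsub'⟩
        refine ⟨H ∪ H', by rw [Finset.coe_union]; exact union_subset hH hH', max β β', ?_⟩
        rw [Tset_inter]
        rintro x ⟨⟨h1, h2⟩, h3⟩
        exact ⟨hsub ⟨h1, (le_max_left β β').trans h3⟩,
          hsub' ⟨h2, (le_max_right β β').trans h3⟩⟩ } with hFildef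
  have htotal : ∀ S : Set (OT κ), S ∈ Fset ∨ Sᶜ ∈ Fset := by
    intro S
    set S₀ : Set (OT κ) := {x | hmap hreg (hcardOT κ) hIioOT f x ∈ S} with hS₀def
    rcases lt_or_eq_of_le (mk_set_le_kappa (hcardOT κ) S₀) with hS₀ | hS₀
    · right
      have hSsmall : #S < κ := by
        have hinj : InjOn (cseq hreg (hcardOT κ) hIioOT f) S :=
          ((cseq_strictMono hreg (hcardOT κ) hIioOT f).injective).injOn
        have hsub2 : (cseq hreg (hcardOT κ) hIioOT f) '' S ⊆ S₀ := by
          rintro x ⟨j, hj, rfl⟩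
          show hmap hreg (hcardOT κ) hIioOT f (cseq hreg (hcardOT κ) hIioOT f j) ∈ S
          rw [hmap_cseq]
          exact hj
        calc #S = #((cseq hreg (hcardOT κ) hIioOT f) '' S) :=
              (mk_image_eq_of_injOn _ _ hinj).symm
        _ ≤ #S₀ := mk_le_mk_of_subset hsub2
        _ < κ := hS₀
      obtain ⟨δ, hδ⟩ := bounded_of_small hreg (hcardOT κ) hIioOT hSsmall
      refine ⟨∅, by simp, δ, ?_⟩
      rintro x ⟨-, hx⟩ hxS
      exact absurd (hδ x hxS) (not_lt.2 hx)
    · obtain ⟨y, hyA, hns⟩ : ∃ y ∈ A₀, ¬ Splits κ S₀ y := by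
        by_contra hc
        push_neg at hc
        exact hunr ⟨S₀, hS₀, hc⟩
      rcases not_and_or.1 hns with hna | hnb
      · right
        have hsm : #(S₀ ∩ y : Set (OT κ)) < κ :=
          lt_of_le_of_ne (mk_set_le_kappa (hcardOT κ) _) hna
        obtain ⟨δ, hδ⟩ := bounded_of_small hreg (hcardOT κ) hIioOT hsm
        refine ⟨{y}, by simpa using hyA,
          nxt hreg (hcardOT κ) hIioOT (hmap hreg (hcardOT κ) hIioOT f δ), ?_⟩
        rintro j ⟨hjT, hjI⟩ hjS
        obtain ⟨p, hp, hpj⟩ := hjT y (Finset.mem_singleton_self y)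
        have hpS₀ : p ∈ S₀ := by
          show hmap hreg (hcardOT κ) hIioOT f p ∈ S
          rw [hpj]; exact hjS
        have hpδ : p < δ := hδ p ⟨hpS₀, hp⟩
        have hle : j ≤ hmap hreg (hcardOT κ) hIioOT f δ := by
          rw [← hpj]
          exact hmap_mono hreg (hcardOT κ) hIioOT f (le_of_lt hpδ)
        exact absurd (lt_of_lt_of_le
          (lt_nxt hreg (hcardOT κ) hIioOT (hmap hreg (hcardOT κ) hIioOT f δ)) hjI)
          (not_lt.2 hle)
      · left
        have hsm : #(S₀ᶜ ∩ y : Set (OT κ)) < κ :=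
          lt_of_le_of_ne (mk_set_le_kappa (hcardOT κ) _) hnb
        obtain ⟨δ, hδ⟩ := bounded_of_small hreg (hcardOT κ) hIioOT hsm
        refine ⟨{y}, by simpa using hyA,
          nxt hreg (hcardOT κ) hIioOT (hmap hreg (hcardOT κ) hIioOT f δ), ?_⟩
        rintro j ⟨hjT, hjI⟩
        by_contra hjS
        obtain ⟨p, hp, hpj⟩ := hjT y (Finset.mem_singleton_self y)
        have hpS₀ : p ∈ S₀ᶜ := by
          show ¬ hmap hreg (hcardOT κ) hIioOT f p ∈ S
          rw [hpj]; exact hjS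
        have hpδ : p < δ := hδ p ⟨hpS₀, hp⟩
        have hle : j ≤ hmap hreg (hcardOT κ) hIioOT f δ := by
          rw [← hpj]
          exact hmap_mono hreg (hcardOT κ) hIioOT f (le_of_lt hpδ)
        exact absurd (lt_of_lt_of_le
          (lt_nxt hreg (hcardOT κ) hIioOT (hmap hreg (hcardOT κ) hIioOT f δ)) hjI)
          (not_lt.2 hle)
  have hproper : ∀ S : Set (OT κ), S ∈ Fset → Sᶜ ∈ Fset → False := by
    intro S h1 h2
    have h3 : S ∩ Sᶜ ∈ Fil.sets := Fil.inter_sets h1 h2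
    have h4 : #(S ∩ Sᶜ : Set (OT κ)) = κ := hmemF_large _ h3
    rw [inter_compl_self, mk_emptyCollection] at h4
    exact (aleph0_pos.trans_le hreg.aleph0_le).ne' h4.symm
  set U : Ultrafilter (OT κ) := Ultrafilter.ofComplNotMemIff Fil (by
    intro S
    constructor
    · intro hnc
      rcases htotal S with h | h
      · exact h
      · exact absurd h hnc
    · intro hS hc
      exact hproper S hS hc) with hUdef
  have hUmem : ∀ A : Set (OT κ), A ∈ U ↔ A ∈ Fset := fun A => Iff.rfl
  set Bse : Set (Set (OT κ)) :=
    range (fun p : {H : Finset (Set (OT κ)) // ↑H ⊆ A₀} × OT κ =>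
      Tset hreg f p.1.1 ∩ Ici p.2) with hBsedef
  have hBse1 : ∀ b ∈ Bse, b ∈ U := by
    rintro b ⟨⟨HH, β⟩, rfl⟩
    exact (hUmem _).2 ⟨HH.1, HH.2, β, subset_rfl⟩
  have hBse2 : ∀ A ∈ U, ∃ b ∈ Bse, b ⊆ A := by
    intro A hA
    obtain ⟨H, hH, β, hsub⟩ := (hUmem A).1 hA
    exact ⟨Tset hreg f H ∩ Ici β, ⟨⟨⟨H, hH⟩, β⟩, rfl⟩, hsub⟩
  have hBse3 : #Bse ≤ rNumber κ := by
    refine mk_range_le.trans ?_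
    have hp : #({H : Finset (Set (OT κ)) // ↑H ⊆ A₀} × OT κ)
        = #{H : Finset (Set (OT κ)) // ↑H ⊆ A₀} * κ := by
      rw [mk_prod, lift_id, lift_id, hcardOT]
    rw [hp]
    calc #{H : Finset (Set (OT κ)) // ↑H ⊆ A₀} * κ ≤ rNumber κ * κ :=
          mul_le_mul_left hVH κ
    _ = max (rNumber κ) κ := mul_eq_max (hreg.aleph0_le.trans hkr) hreg.aleph0_le
    _ = rNumber κ := max_eq_left hkr
  exact ⟨#Bse, ⟨U, fun A hA => hmemF_large A ((hUmem A).1 hA), Bse, hBse1, hBse2, rfl⟩, hBse3⟩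

end Final
end RUD
end RUDdev

theorem stmt7 (κ : Cardinal) (hreg : κ.IsRegular)
    (h : rNumber κ < dNumber κ) : rNumber κ = uNumber κ := by
  obtain ⟨c, hc, hcr⟩ := RUD.exists_small_base hreg h
  refine le_antisymm ?_ ?_
  · exact le_csInf ⟨c, hc⟩ (fun b hb => RUD.rNumber_le_base hreg hb)
  · exact (csInf_le ⟨0, fun c' _ => (zero_le : (0 : Cardinal) ≤ c')⟩ hc).trans hcr
end

section
/- Let κ be a regular cardinal, let 𝓗 ⊆ κ^κ be a big family with |𝓗| ≤ λ where λ = 𝔯_κ < 𝔡_κ. Then there is a uniform ultrafilter 𝒰 over κ with a base of size at most λ; in particular, any filter generated by finite intersections of 𝓑 = {{β < κ : f(β) ≤ g(β)} : f ∈ 𝓗}, for a suitable g witnessing that 𝓗 is not finitely dominating, extends to an ultrafilter with Ch(𝒰) ≤ λ. -/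
open Cardinal
open Set

section Aux
universe u
variable {κ : Cardinal.{u}}

lemma aux_mk_le (s : Set κ.ord.ToType) : #↥s ≤ κ := by
  calc #↥s ≤ #κ.ord.ToType := mk_set_le s
  _ = κ := mk_ord_toType κ

lemma aux_bound (hreg : κ.IsRegular) {s : Set κ.ord.ToType} (hs : #↥s < κ) :
    ∃ ξ : κ.ord.ToType, ∀ γ ∈ s, γ < ξ := by
  haveI : IsWellOrder κ.ord.ToType (· < ·) := isWellOrder_lt
  by_contra hc
  push_neg at hc
  have := Order.cof_le (s := s) hc
  rw [Ordinal.cof_toType, hreg.cof_eq] at this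
  exact absurd hs (not_lt.mpr this)

lemma aux_large_diff (hreg : κ.IsRegular) {T s : Set κ.ord.ToType}
    (hT : #↥T = κ) (hs : #↥s < κ) : #↥(T \ s) = κ := by
  refine le_antisymm (aux_mk_le _) (not_lt.mp fun hlt => ?_)
  have hsub : T ⊆ (T \ s) ∪ s := fun x hx => by
    by_cases h : x ∈ s
    · exact Or.inr h
    · exact Or.inl ⟨hx, h⟩
  have := (mk_le_mk_of_subset hsub).trans (mk_union_le _ _)
  rw [hT] at this
  exact absurd this (not_le.mpr (Cardinal.add_lt_of_lt hreg.aleph0_le hlt hs))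

lemma aux_img (hreg : κ.IsRegular) {h : κ.ord.ToType → κ.ord.ToType}
    (hfib : ∀ ξ, #↥(h ⁻¹' {ξ}) < κ) {w : Set κ.ord.ToType} (hw : #↥w = κ) :
    #↥(h '' w) = κ := by
  refine le_antisymm (aux_mk_le _) (not_lt.mp fun hlt => ?_)
  have hsub : w ⊆ ⋃ ξ ∈ h '' w, h ⁻¹' {ξ} := fun x hx => by
    simp only [mem_iUnion]
    exact ⟨h x, ⟨x, hx, rfl⟩, rfl⟩
  have h1 : #↥w ≤ #↥(h '' w) * ⨆ ξ : ↥(h '' w), #↥(h ⁻¹' {(ξ : κ.ord.ToType)}) :=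
    (mk_le_mk_of_subset hsub).trans (mk_biUnion_le _ _)
  have h2 : (⨆ ξ : ↥(h '' w), #↥(h ⁻¹' {(ξ : κ.ord.ToType)})) < κ :=
    Cardinal.iSup_lt_of_isRegular hreg hlt fun ξ => hfib _
  have := h1.trans_lt (Cardinal.mul_lt_of_lt hreg.aleph0_le hlt h2)
  rw [hw] at this
  exact lt_irrefl _ this

lemma aux_split (hreg : κ.IsRegular) {T : Set κ.ord.ToType} (hT : #↥T = κ) :
    ∃ S : Set κ.ord.ToType, #↥S = κ ∧ #↥(S ∩ T) = κ ∧ #↥(Sᶜ ∩ T) = κ := by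
  have hcard : #↥T = #(κ.ord.ToType ⊕ κ.ord.ToType) := by
    simp only [mk_sum, lift_id, mk_ord_toType, hT]
    exact (Cardinal.add_eq_self hreg.aleph0_le).symm
  obtain ⟨q⟩ := Cardinal.eq.mp hcard
  set e₁ : κ.ord.ToType → κ.ord.ToType := fun a => (q.symm (Sum.inl a) : κ.ord.ToType)
  set e₂ : κ.ord.ToType → κ.ord.ToType := fun a => (q.symm (Sum.inr a) : κ.ord.ToType)
  have he₁ : Function.Injective e₁ := fun a b hab => by
    have := Subtype.ext hab (p := (· ∈ T))
    simpa using q.symm.injective this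
  have he₂ : Function.Injective e₂ := fun a b hab => by
    have := Subtype.ext hab (p := (· ∈ T))
    simpa using q.symm.injective this
  refine ⟨range e₁, ?_, ?_, ?_⟩
  · rw [mk_range_eq _ he₁, mk_ord_toType]
  · have : range e₁ ∩ T = range e₁ := by
      refine inter_eq_self_of_subset_left ?_
      rintro x ⟨a, rfl⟩; exact (q.symm (Sum.inl a)).2
    rw [this, mk_range_eq _ he₁, mk_ord_toType]
  · refine le_antisymm (aux_mk_le _) ?_
    have hsub : range e₂ ⊆ (range e₁)ᶜ ∩ T := by
      rintro x ⟨a, rfl⟩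
      refine ⟨?_, (q.symm (Sum.inr a)).2⟩
      rintro ⟨b, hb⟩
      have : q.symm (Sum.inl b) = q.symm (Sum.inr a) := Subtype.ext hb
      simpa using q.symm.injective this
    calc κ = #κ.ord.ToType := (mk_ord_toType κ).symm
    _ = #↥(range e₂) := (mk_range_eq _ he₂).symm
    _ ≤ _ := mk_le_mk_of_subset hsub

end Aux


/-- A family `H ⊆ κ^κ` is big iff for every `F ⊆ [κ]^κ` and every `g : κ → κ` such that
`{β < κ : f(β) ≤ g(β)} ∈ F` for every `f ∈ H`, there is an increasing `<κ`-to-one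
function `h : κ → κ` for which `{h''(y ∩ z) : y, z ∈ F}` is an unreaped family. -/
def BigFamily (κ : Cardinal) (H : Set (κ.ord.ToType → κ.ord.ToType)) : Prop :=
  ∀ (F : Set (Set κ.ord.ToType)) (g : κ.ord.ToType → κ.ord.ToType),
    (∀ y ∈ F, #↥y = κ) →
    (∀ f ∈ H, {β : κ.ord.ToType | f β ≤ g β} ∈ F) →
    ∃ h : κ.ord.ToType → κ.ord.ToType, Monotone h ∧
      (∀ ξ : κ.ord.ToType, #↥(h ⁻¹' {ξ}) < κ) ∧
      Unreaped κ {w : Set κ.ord.ToType | ∃ y ∈ F, ∃ z ∈ F, w = h '' (y ∩ z)}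

/-- The characteristic `Ch(U)` of an ultrafilter: the minimal cardinality of a base. -/
noncomputable def ultraCh {α : Type*} (U : Ultrafilter α) : Cardinal :=
  sInf {c : Cardinal | ∃ B : Set (Set α),
    (∀ b ∈ B, b ∈ U) ∧ (∀ A ∈ U, ∃ b ∈ B, b ⊆ A) ∧ #↥B = c}

section Aux2
universe u
variable {κ : Cardinal.{u}}

/-- A pointwise bounded family is never big. -/
lemma aux_bounded_false (hreg : κ.IsRegular) {H : Set (κ.ord.ToType → κ.ord.ToType)}
    (hbig : BigFamily κ H) {g : κ.ord.ToType → κ.ord.ToType}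
    (hg : ∀ f ∈ H, ∀ β, f β ≤ g β) : False := by
  obtain ⟨h, -, hfib, hunr⟩ := hbig {Set.univ} g
    (by rintro y rfl; simp [mk_ord_toType])
    (fun f hf => by
      have : {β | f β ≤ g β} = Set.univ := eq_univ_of_forall fun β => hg f hf β
      simp [this])
  have himg : #↥(h '' (Set.univ ∩ Set.univ)) = κ := by
    refine aux_img hreg hfib ?_
    simp [mk_ord_toType]
  obtain ⟨S, hS, h1, h2⟩ := aux_split hreg himg
  refine hunr ⟨S, hS, ?_⟩
  rintro y ⟨y', rfl, z', rfl, rfl⟩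
  exact ⟨h1, h2⟩

end Aux2

/-- Let `κ` be regular and `H ⊆ κ^κ` a big family with `|H| ≤ λ`, where
`λ = 𝔯_κ < 𝔡_κ`.  Then there is a uniform ultrafilter over `κ` with a base of size at
most `λ`; in particular, there is a `g` witnessing that `H` is not finitely dominating
such that the filter generated by (finite intersections of)
`B = {{β < κ : f(β) ≤ g(β)} : f ∈ H}` extends to an ultrafilter `U` with `Ch(U) ≤ λ`. -/
theorem stmt19 (κ lam : Cardinal) (hreg : κ.IsRegular)
    (H : Set (κ.ord.ToType → κ.ord.ToType))
    (hbig : BigFamily κ H) (hHcard : #↥H ≤ lam)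
    (hlam : lam = rNumber κ) (hrd : rNumber κ < dNumber κ) :
    (∃ U : Ultrafilter κ.ord.ToType, (∀ A ∈ U, #↥A = κ) ∧
      ∃ B : Set (Set κ.ord.ToType),
        (∀ b ∈ B, b ∈ U) ∧ (∀ A ∈ U, ∃ b ∈ B, b ⊆ A) ∧ #↥B ≤ lam) ∧
    ∃ g : κ.ord.ToType → κ.ord.ToType,
      (∀ u : Finset (κ.ord.ToType → κ.ord.ToType), ↑u ⊆ H →
        ∀ hne : u.Nonempty, ¬ AlmostLE κ g (fun β => u.sup' hne fun f => f β)) ∧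
      ∃ U : Ultrafilter κ.ord.ToType,
        (∀ f ∈ H, {β : κ.ord.ToType | f β ≤ g β} ∈ U) ∧ ultraCh U ≤ lam := by
  classical
  by_cases hsmall : #↥H < κ
  · exfalso
    have hne : ∀ β : κ.ord.ToType, #↥((fun f : κ.ord.ToType → κ.ord.ToType => f β) '' H) < κ :=
      fun β => lt_of_le_of_lt mk_image_le hsmall
    choose ξ hξ using fun β => aux_bound hreg (hne β)
    exact aux_bounded_false hreg hbig (g := ξ) fun f hf β => le_of_lt (hξ β _ ⟨f, hf, rfl⟩)
  push_neg at hsmall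
  have hkl : κ ≤ lam := hsmall.trans hHcard
  have hlinf : ℵ₀ ≤ lam := hreg.aleph0_le.trans hkl
  haveI : Infinite ↥H := Cardinal.infinite_iff.mpr (hreg.aleph0_le.trans hsmall)
  haveI hαne : Nonempty κ.ord.ToType := by
    rw [← Cardinal.mk_ne_zero_iff, mk_ord_toType]
    exact hreg.pos.ne'
  -- Step 1 : a function g₀ not finitely dominated by H
  have hg0 : ∃ g₀ : κ.ord.ToType → κ.ord.ToType,
      ∀ u : Finset (κ.ord.ToType → κ.ord.ToType), ↑u ⊆ H →
        ∀ hne : u.Nonempty, ¬ AlmostLE κ g₀ (fun β => u.sup' hne fun f => f β) := by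
    by_contra hcon
    push_neg at hcon
    set Ψ : {u : Finset ↥H // u.Nonempty} → (κ.ord.ToType → κ.ord.ToType) :=
      fun u => fun β => u.val.sup' u.prop (fun f => f.val β) with hΨ
    have hdom : ∀ x, ∃ d ∈ Set.range Ψ, AlmostLE κ x d := by
      intro x
      obtain ⟨u, husub, hne, halm⟩ := hcon x
      have hinj : Function.Injective (fun p : {y // y ∈ u} => (⟨p.1, husub p.2⟩ : ↥H)) :=
        fun a b hab => Subtype.ext (congrArg (Subtype.val : ↥H → _) hab)
      set v : Finset ↥H := u.attach.map ⟨_, hinj⟩ with hv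
      have hvne : v.Nonempty := hne.attach.map
      have hkey : Ψ ⟨v, hvne⟩ = fun β => u.sup' hne fun f => f β := by
        funext β
        refine le_antisymm ?_ ?_
        · refine Finset.sup'_le _ _ ?_
          rintro f hf
          obtain ⟨p, -, rfl⟩ := Finset.mem_map.mp hf
          exact Finset.le_sup' (f := fun f => f β) p.2
        · refine Finset.sup'_le _ _ ?_
          intro a ha
          have hmem : (⟨a, husub ha⟩ : ↥H) ∈ v :=
            Finset.mem_map.mpr ⟨⟨a, ha⟩, Finset.mem_attach _ _, rfl⟩
          exact Finset.le_sup' (f := fun f : ↥H => f.val β) hmem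
      exact ⟨Ψ ⟨v, hvne⟩, ⟨_, rfl⟩, by rw [hkey]; exact halm⟩
    have h1 : dNumber κ ≤ #↥(Set.range Ψ) := csInf_le' ⟨_, hdom, rfl⟩
    have h2 : #↥(Set.range Ψ) ≤ lam := by
      calc #↥(Set.range Ψ) ≤ #{u : Finset ↥H // u.Nonempty} := mk_range_le
      _ ≤ #(Finset ↥H) := mk_subtype_le _
      _ = #↥H := mk_finset_of_infinite _
      _ ≤ lam := hHcard
    rw [hlam] at h2
    exact absurd (h1.trans h2) (not_le.mpr hrd)
  obtain ⟨g₀, hg₀⟩ := hg0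
  -- the family of finite intersections of the sets {f ≤ g₀}
  set Φ : {u : Finset ↥H // u.Nonempty} → Set κ.ord.ToType :=
    fun u => ⋂ f ∈ u.val, {β | (f : κ.ord.ToType → κ.ord.ToType) β ≤ g₀ β} with hΦ
  set F : Set (Set κ.ord.ToType) := Set.range Φ with hF
  have hΦmem : ∀ (u : {u : Finset ↥H // u.Nonempty}) (β : κ.ord.ToType),
      β ∈ Φ u ↔ ∀ f ∈ u.val, (f : κ.ord.ToType → κ.ord.ToType) β ≤ g₀ β := by
    intro u β
    rw [hΦ]
    simp [Set.mem_iInter]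
  have hFsize : ∀ y ∈ F, #↥y = κ := by
    rintro y ⟨u, rfl⟩
    refine le_antisymm (aux_mk_le _) ?_
    set u' : Finset (κ.ord.ToType → κ.ord.ToType) := u.val.image (fun f => f.val) with hu'
    have hu'sub : ↑u' ⊆ H := by
      intro f hf
      rw [hu'] at hf
      simp only [Finset.coe_image, Set.mem_image, Finset.mem_coe] at hf
      obtain ⟨p, -, rfl⟩ := hf
      exact p.2
    have hu'ne : u'.Nonempty := u.prop.image _
    have hbig2 := hg₀ u' hu'sub hu'ne
    rw [AlmostLE, not_lt] at hbig2
    refine hbig2.trans (mk_le_mk_of_subset ?_)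
    intro β hβ
    rw [hΦmem]
    intro f hf
    have h1 : (f : κ.ord.ToType → κ.ord.ToType) β ≤ u'.sup' hu'ne (fun f' => f' β) :=
      Finset.le_sup' (f := fun f' : κ.ord.ToType → κ.ord.ToType => f' β)
        (Finset.mem_image_of_mem _ hf)
    exact h1.trans (le_of_lt hβ)
  have hFinter : ∀ w1 ∈ F, ∀ w2 ∈ F, w1 ∩ w2 ∈ F := by
    rintro w1 ⟨u1, rfl⟩ w2 ⟨u2, rfl⟩
    refine ⟨⟨u1.val ∪ u2.val, Finset.Nonempty.inl u1.prop⟩, ?_⟩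
    ext β
    rw [hΦmem]
    simp only [Set.mem_inter_iff]
    rw [hΦmem, hΦmem]
    constructor
    · intro hh
      exact ⟨fun f hf => hh f (Finset.mem_union_left _ hf),
             fun f hf => hh f (Finset.mem_union_right _ hf)⟩
    · intro hh f hf
      rcases Finset.mem_union.mp hf with h' | h'
      · exact hh.1 f h'
      · exact hh.2 f h'
  have hSfF : ∀ f ∈ H, {β : κ.ord.ToType | f β ≤ g₀ β} ∈ F := by
    intro f hf
    refine ⟨⟨{⟨f, hf⟩}, Finset.singleton_nonempty _⟩, ?_⟩
    ext β
    rw [hΦmem]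
    simp
  -- apply bigness
  obtain ⟨h, hmono, hfib, hunr⟩ := hbig F g₀ hFsize hSfF
  set A' : Set (Set κ.ord.ToType) :=
    {w | ∃ y ∈ F, ∃ z ∈ F, w = h '' (y ∩ z)} with hA'
  set Co : Set (Set κ.ord.ToType) := {X | #↥Xᶜ < κ} with hCo
  -- the generated filter is proper
  have hCL : ∀ t : Set (Set κ.ord.ToType), t.Finite → t ⊆ A' ∪ Co →
      ∃ w ∈ F, ∃ s : Set κ.ord.ToType, #↥s < κ ∧ h '' w \ s ⊆ ⋂₀ t := by
    intro t tfin
    refine Set.Finite.induction_on (motive := fun t _ => t ⊆ A' ∪ Co →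
      ∃ w ∈ F, ∃ s : Set κ.ord.ToType, #↥s < κ ∧ h '' w \ s ⊆ ⋂₀ t) t tfin ?_ ?_
    · intro _
      refine ⟨Φ ⟨{Classical.arbitrary ↥H}, Finset.singleton_nonempty _⟩, ⟨_, rfl⟩, ∅, ?_, ?_⟩
      · rw [mk_emptyCollection]
        exact hreg.pos
      · rw [Set.sInter_empty]
        exact Set.subset_univ _
    · rintro a t' ha t'fin ih hsub
      obtain ⟨w, hw, s, hs, hws⟩ := ih fun x hx => hsub (Set.mem_insert_of_mem _ hx)
      rcases hsub (Set.mem_insert a t') with haA | haC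
      · obtain ⟨y, hy, z, hz, rfl⟩ := haA
        refine ⟨w ∩ (y ∩ z), hFinter _ hw _ (hFinter _ hy _ hz), s, hs, ?_⟩
        rw [Set.sInter_insert]
        rintro β ⟨hβw, hβs⟩
        constructor
        · exact Set.image_mono Set.inter_subset_right hβw
        · exact hws ⟨Set.image_mono Set.inter_subset_left hβw, hβs⟩
      · refine ⟨w, hw, s ∪ aᶜ,
          lt_of_le_of_lt (mk_union_le _ _) (Cardinal.add_lt_of_lt hreg.aleph0_le hs haC), ?_⟩
        rw [Set.sInter_insert]
        rintro β ⟨hβw, hβs⟩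
        constructor
        · by_contra hna
          exact hβs (Or.inr hna)
        · exact hws ⟨hβw, fun hh => hβs (Or.inl hh)⟩
  have hGneBot : (Filter.generate (A' ∪ Co)).NeBot := by
    refine Filter.generate_neBot_iff.mpr fun t hts htf => ?_
    obtain ⟨w, hw, s, hs, hws⟩ := hCL t htf hts
    have hwκ : #↥w = κ := hFsize w hw
    have hdiff : #↥(h '' w \ s) = κ := aux_large_diff hreg (aux_img hreg hfib hwκ) hs
    have hne2 : (h '' w \ s).Nonempty := by
      rw [← Set.nonempty_coe_sort, ← Cardinal.mk_ne_zero_iff, hdiff]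
      exact hreg.pos.ne'
    exact hne2.mono hws
  obtain ⟨U, hU⟩ := Ultrafilter.exists_le (Filter.generate (A' ∪ Co))
  have hmemU : ∀ X ∈ A' ∪ Co, X ∈ U := fun X hX => hU (Filter.mem_generate_of_mem hX)
  have hUuniform : ∀ X ∈ U, #↥X = κ := by
    intro X hX
    refine le_antisymm (aux_mk_le _) (not_lt.mp fun hlt => ?_)
    have hXc : Xᶜ ∈ U := hmemU _ (Or.inr (by rw [hCo]; simpa using hlt))
    have h0 : (∅ : Set κ.ord.ToType) ∈ (U : Filter κ.ord.ToType) := by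
      have := Filter.inter_mem (Ultrafilter.mem_coe.mpr hX) (Ultrafilter.mem_coe.mpr hXc)
      rwa [Set.inter_compl_self] at this
    exact Filter.empty_notMem _ h0
  -- the base
  set B₁ : Set (Set κ.ord.ToType) :=
    Set.range (fun p : ↥F × κ.ord.ToType => h '' (p.1 : Set κ.ord.ToType) \ Iio p.2) with hB₁
  have hB₁U : ∀ b ∈ B₁, b ∈ U := by
    rintro b ⟨⟨⟨w, hw⟩, ξ⟩, rfl⟩
    have h1 : h '' w ∈ U := hmemU _ (Or.inl ⟨w, hw, w, hw, by rw [Set.inter_self]⟩)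
    have h2 : (Iio ξ)ᶜ ∈ U := hmemU _ (Or.inr (by rw [hCo]; simpa using Cardinal.mk_Iio_ord_toType ξ))
    have := Filter.inter_mem (Ultrafilter.mem_coe.mpr h1) (Ultrafilter.mem_coe.mpr h2)
    rwa [← Set.diff_eq] at this
  have hbase : ∀ X ∈ U, ∃ b ∈ B₁, b ⊆ X := by
    intro X hX
    have hXκ := hUuniform X hX
    have hnotsplit : ∃ y ∈ A', ¬ Splits κ X y := by
      by_contra hc
      push_neg at hc
      exact hunr ⟨X, hXκ, hc⟩
    obtain ⟨y, hyA, hysplit⟩ := hnotsplit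
    obtain ⟨y', hy', z', hz', rfl⟩ := hyA
    have hwF : y' ∩ z' ∈ F := hFinter _ hy' _ hz'
    have hyU : h '' (y' ∩ z') ∈ U := hmemU _ (Or.inl ⟨y', hy', z', hz', rfl⟩)
    have h1 : #↥(X ∩ h '' (y' ∩ z')) = κ :=
      hUuniform _ (Filter.inter_mem (Ultrafilter.mem_coe.mpr hX) (Ultrafilter.mem_coe.mpr hyU))
    have h2 : #↥(Xᶜ ∩ h '' (y' ∩ z')) < κ :=
      lt_of_le_of_ne (aux_mk_le _) fun he => hysplit ⟨h1, he⟩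
    obtain ⟨ξ, hξ⟩ := aux_bound hreg h2
    refine ⟨h '' (y' ∩ z') \ Iio ξ, ⟨⟨⟨y' ∩ z', hwF⟩, ξ⟩, rfl⟩, ?_⟩
    rintro β ⟨hβw, hβξ⟩
    by_contra hβX
    exact hβξ (hξ β ⟨hβX, hβw⟩)
  have hFcard : #↥F ≤ lam := by
    calc #↥F ≤ #{u : Finset ↥H // u.Nonempty} := mk_range_le
    _ ≤ #(Finset ↥H) := mk_subtype_le _
    _ = #↥H := mk_finset_of_infinite _
    _ ≤ lam := hHcard
  have hB₁card : #↥B₁ ≤ lam := by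
    calc #↥B₁ ≤ #(↥F × κ.ord.ToType) := mk_range_le
    _ = #↥F * κ := by rw [mk_prod, lift_id, lift_id, mk_ord_toType]
    _ ≤ lam * lam := mul_le_mul' hFcard hkl
    _ = lam := Cardinal.mul_eq_self hlinf
  refine ⟨⟨U, hUuniform, B₁, hB₁U, hbase, hB₁card⟩, ?_⟩
  -- find a bound g₁ for H modulo U
  have hg1 : ∃ g₁ : κ.ord.ToType → κ.ord.ToType,
      ∀ f ∈ H, {β : κ.ord.ToType | g₁ β < f β} ∉ U := by
    by_contra hcon
    push_neg at hcon
    set sel : Set κ.ord.ToType → κ.ord.ToType → κ.ord.ToType := fun b β =>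
      if hb : (b ∩ Ici β).Nonempty then hb.some else Classical.arbitrary _ with hsel
    have hselmem : ∀ b β, (b ∩ Ici β).Nonempty → sel b β ∈ b ∧ β ≤ sel b β := by
      intro b β hb
      rw [hsel]
      simp only [dif_pos hb]
      exact ⟨hb.some_mem.1, hb.some_mem.2⟩
    have hbne : ∀ b ∈ B₁, ∀ β, (b ∩ Ici β).Nonempty := by
      rintro b ⟨⟨⟨w, hw⟩, ξ⟩, rfl⟩ β
      have hbκ : #↥(h '' w \ Iio ξ) = κ :=
        aux_large_diff hreg (aux_img hreg hfib (hFsize w hw)) (Cardinal.mk_Iio_ord_toType ξ)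
      by_contra hc
      have hsub2 : (h '' w \ Iio ξ) ⊆ Iio β := by
        intro γ hγ
        by_contra hγβ
        exact hc ⟨γ, hγ, Set.mem_Ici.mpr (not_lt.mp hγβ)⟩
      have := (mk_le_mk_of_subset hsub2).trans_lt (Cardinal.mk_Iio_ord_toType β)
      rw [hbκ] at this
      exact lt_irrefl _ this
    have hx'ex : ∀ x : κ.ord.ToType → κ.ord.ToType,
        ∃ x' : κ.ord.ToType → κ.ord.ToType, ∀ β γ, γ ≤ β → x γ < x' β := by
      intro x
      have hIic : ∀ β : κ.ord.ToType, #↥(Iic β) < κ := by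
        intro β
        have : (Iic β : Set κ.ord.ToType) ⊆ insert β (Iio β) := by
          intro γ hγ
          rcases (mem_Iic.mp hγ).lt_or_eq with h' | h'
          · exact Or.inr h'
          · exact Or.inl h'
        refine (mk_le_mk_of_subset this).trans_lt ?_
        refine (mk_insert_le).trans_lt ?_
        exact Cardinal.add_lt_of_lt hreg.aleph0_le (Cardinal.mk_Iio_ord_toType β)
          (lt_of_lt_of_le one_lt_aleph0 hreg.aleph0_le)
      have hsm : ∀ β, #↥(x '' Iic β) < κ := fun β => lt_of_le_of_lt mk_image_le (hIic β)
      choose x' hx' using fun β => aux_bound hreg (hsm β)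
      exact ⟨x', fun β γ hγ => hx' β _ ⟨γ, hγ, rfl⟩⟩
    set Ψ' : ↥H × ↥B₁ → (κ.ord.ToType → κ.ord.ToType) :=
      fun p => fun β => (p.1 : κ.ord.ToType → κ.ord.ToType) (sel (p.2 : Set κ.ord.ToType) β)
      with hΨ'
    have hdom : ∀ x, ∃ d ∈ Set.range Ψ', AlmostLE κ x d := by
      intro x
      obtain ⟨x', hx'p⟩ := hx'ex x
      obtain ⟨f, hf, hfU⟩ := hcon x'
      obtain ⟨b, hb, hbsub⟩ := hbase _ hfU
      refine ⟨Ψ' (⟨f, hf⟩, ⟨b, hb⟩), ⟨_, rfl⟩, ?_⟩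
      have hempty : {β | Ψ' (⟨f, hf⟩, ⟨b, hb⟩) β < x β} = ∅ := by
        refine Set.eq_empty_iff_forall_notMem.mpr fun β hβ => ?_
        obtain ⟨hmem, hle⟩ := hselmem b β (hbne b hb β)
        have h3 : x' (sel b β) < f (sel b β) := hbsub hmem
        have h4 : x β < x' (sel b β) := hx'p (sel b β) β hle
        exact absurd (h4.trans h3) (not_lt.mpr (le_of_lt hβ))
      rw [AlmostLE, hempty, mk_emptyCollection]
      exact hreg.pos
    have h1 : dNumber κ ≤ #↥(Set.range Ψ') := csInf_le' ⟨_, hdom, rfl⟩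
    have h2 : #↥(Set.range Ψ') ≤ lam := by
      calc #↥(Set.range Ψ') ≤ #(↥H × ↥B₁) := mk_range_le
      _ = #↥H * #↥B₁ := by rw [mk_prod, lift_id, lift_id]
      _ ≤ lam * lam := mul_le_mul' hHcard hB₁card
      _ = lam := Cardinal.mul_eq_self hlinf
    rw [hlam] at h2
    exact absurd (h1.trans h2) (not_le.mpr hrd)
  obtain ⟨g₁, hg₁⟩ := hg1
  refine ⟨fun β => max (g₀ β) (g₁ β), ?_, U, ?_, ?_⟩
  · intro u hu hne halm
    refine hg₀ u hu hne ?_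
    rw [AlmostLE] at halm ⊢
    refine lt_of_le_of_lt (mk_le_mk_of_subset ?_) halm
    intro β hβ
    simp only [Set.mem_setOf_eq] at hβ ⊢
    exact lt_of_lt_of_le hβ (le_max_left _ _)
  · intro f hf
    have hcm : {β : κ.ord.ToType | g₁ β < f β}ᶜ ∈ U :=
      Ultrafilter.compl_mem_iff_notMem.mpr (hg₁ f hf)
    refine Filter.mem_of_superset hcm ?_
    intro β hβ
    have : f β ≤ g₁ β := not_lt.mp hβ
    exact this.trans (le_max_right _ _)
  · calc ultraCh U ≤ #↥B₁ := csInf_le' ⟨B₁, hB₁U, hbase, rfl⟩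
    _ ≤ lam := hB₁card
end
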